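/- If w(A ⊗ B) = 2 w(A) w(B) for bounded operators A on H and B on K (with w(A), w(B) > 0), then d(A) = w(A) and d(B) = w(B), i.e., both A and B are numerical-radius orthogonal to the identity in the sense of Birkhoff–James: w(A − λI) ≥ w(A) for all λ ∈ ℂ, and similarly for B. -/

import Mathlib

open ContinuousLinearMap

/-- Numerical radius: `w(T) = sup { |⟨Tx,x⟩| : ‖x‖ = 1 }`. -/
noncomputable def nrad {E : Type*} [NormedAddCommGroup E] [InnerProductSpace ℂ E]
    (T : E →L[ℂ] E) : ℝ :=
  ⨆ x : {x : E // ‖x‖ = 1}, ‖(inner ℂ (T x.1) x.1 : ℂ)‖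

/-- Numerical radius distance from the scalar operators: `d(T) = inf_{λ∈ℂ} w(T - λI)`. -/
noncomputable def nradDist {E : Type*} [NormedAddCommGroup E] [InnerProductSpace ℂ E]
    (T : E →L[ℂ] E) : ℝ :=
  ⨅ l : ℂ, nrad (T - l • (1 : E →L[ℂ] E))

/-- `tmul` realizes `E` as the Hilbert tensor product of `H` and `K`:
the inner product is multiplicative on elementary tensors and elementary
tensors span a dense subspace. -/
structure IsHilbertTensorMap
    {H K E : Type*} [NormedAddCommGroup H] [InnerProductSpace ℂ H]
    [NormedAddCommGroup K] [InnerProductSpace ℂ K]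
    [NormedAddCommGroup E] [InnerProductSpace ℂ E]
    (tmul : H →ₗ[ℂ] K →ₗ[ℂ] E) : Prop where
  inner_tmul : ∀ (x z : H) (y w : K),
    (inner ℂ (tmul x y) (tmul z w) : ℂ) = (inner ℂ x z : ℂ) * (inner ℂ y w : ℂ)
  dense_span :
    Dense ((Submodule.span ℂ (Set.range fun p : H × K => tmul p.1 p.2) : Submodule ℂ E) : Set E)

/-- `T` is the tensor product operator `A ⊗ B`, i.e. `T (x ⊗ y) = A x ⊗ B y`. -/
def IsTensorOp {H K E : Type*} [NormedAddCommGroup H] [InnerProductSpace ℂ H]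
    [NormedAddCommGroup K] [InnerProductSpace ℂ K]
    [NormedAddCommGroup E] [InnerProductSpace ℂ E]
    (tmul : H →ₗ[ℂ] K →ₗ[ℂ] E)
    (A : H →L[ℂ] H) (B : K →L[ℂ] K) (T : E →L[ℂ] E) : Prop :=
  ∀ (x : H) (y : K), T (tmul x y) = tmul (A x) (B y)



noncomputable section

local notation "⟪" x ", " y "⟫" => (inner ℂ x y : ℂ)

section Basic

variable {H : Type*} [NormedAddCommGroup H] [InnerProductSpace ℂ H]

lemma nrad_nonneg (T : H →L[ℂ] H) : 0 ≤ nrad T :=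
  Real.iSup_nonneg fun _ => norm_nonneg _

lemma nrad_bddAbove (T : H →L[ℂ] H) :
    BddAbove (Set.range fun x : {x : H // ‖x‖ = 1} => ‖⟪T x.1, x.1⟫‖) := by
  refine ⟨‖T‖, ?_⟩
  rintro _ ⟨y, rfl⟩
  calc ‖⟪T y.1, y.1⟫‖ ≤ ‖T y.1‖ * ‖y.1‖ := norm_inner_le_norm _ _
    _ ≤ (‖T‖ * ‖y.1‖) * ‖y.1‖ := by
        exact mul_le_mul_of_nonneg_right (T.le_opNorm y.1) (norm_nonneg _)
    _ = ‖T‖ := by rw [y.2]; ring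

lemma inner_le_nrad (T : H →L[ℂ] H) (x : H) (hx : ‖x‖ = 1) : ‖⟪T x, x⟫‖ ≤ nrad T :=
  le_ciSup (nrad_bddAbove T) (⟨x, hx⟩ : {x : H // ‖x‖ = 1})

lemma inner_le_nrad_mul (T : H →L[ℂ] H) (x : H) : ‖⟪T x, x⟫‖ ≤ nrad T * ‖x‖ ^ 2 := by
  rcases eq_or_ne x 0 with rfl | hx
  · simp
  · have hn : ‖x‖ ≠ 0 := norm_ne_zero_iff.2 hx
    have hu : ‖(‖x‖⁻¹ : ℂ) • x‖ = 1 := by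
      rw [norm_smul]
      simp [norm_inv, hn]
    have := inner_le_nrad T ((‖x‖⁻¹ : ℂ) • x) hu
    rw [map_smul, inner_smul_left, inner_smul_right] at this
    rw [norm_mul, norm_mul] at this
    simp only [norm_inv, RCLike.norm_conj] at this
    have hnn : ‖(‖x‖ : ℂ)‖ = ‖x‖ := by
      simp [Complex.norm_real]
    rw [hnn] at this
    have h2 : ‖x‖⁻¹ * (‖x‖⁻¹ * ‖⟪T x, x⟫‖) ≤ nrad T := this
    have h3 : 0 < ‖x‖ := lt_of_le_of_ne (norm_nonneg x) (Ne.symm hn)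
    calc ‖⟪T x, x⟫‖ = ‖x‖ ^ 2 * (‖x‖⁻¹ * (‖x‖⁻¹ * ‖⟪T x, x⟫‖)) := by field_simp
      _ ≤ ‖x‖ ^ 2 * nrad T := mul_le_mul_of_nonneg_left h2 (sq_nonneg _)
      _ = nrad T * ‖x‖ ^ 2 := mul_comm _ _

lemma nrad_le (T : H →L[ℂ] H) {M : ℝ} (hM : 0 ≤ M)
    (h : ∀ x : H, ‖x‖ = 1 → ‖⟪T x, x⟫‖ ≤ M) : nrad T ≤ M :=
  Real.iSup_le (fun x => h x.1 x.2) hM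

end Basic

section Phi

variable {H : Type*} [NormedAddCommGroup H] [InnerProductSpace ℂ H]

lemma phi_bound (A : H →L[ℂ] H) {m : ℕ} (x : Fin m → H)
    (R : EuclideanSpace ℂ (Fin m) →L[ℂ] EuclideanSpace ℂ (Fin m))
    (hR : LinearMap.IsSymmetric (R : EuclideanSpace ℂ (Fin m) →ₗ[ℂ] EuclideanSpace ℂ (Fin m)))
    {M : ℝ} (hM : ∀ w : EuclideanSpace ℂ (Fin m), ‖w‖ = 1 → ‖⟪R w, w⟫‖ ≤ M) :
    ‖∑ j, ∑ k, ⟪A (x j), x k⟫ *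
        ⟪R (EuclideanSpace.basisFun (Fin m) ℂ j), EuclideanSpace.basisFun (Fin m) ℂ k⟫‖
      ≤ nrad A * M * ∑ j, ‖x j‖ ^ 2 := by
  classical
  set e : Fin m → EuclideanSpace ℂ (Fin m) := fun j => EuclideanSpace.basisFun (Fin m) ℂ j with he
  have hn : Module.finrank ℂ (EuclideanSpace ℂ (Fin m)) = m := finrank_euclideanSpace_fin
  set v := hR.eigenvectorBasis hn with hv
  set lam := hR.eigenvalues hn with hlam
  have happ : ∀ i, R (v i) = (lam i : ℂ) • v i := fun i => hR.apply_eigenvectorBasis hn i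
  set t : Fin m → Fin m → ℂ := fun i j => ⟪v i, e j⟫ with ht
  set ξ : Fin m → H := fun i => ∑ j, t i j • x j with hξ
  -- eigenvalues bounded by M
  have hlamM : ∀ i, |lam i| ≤ M := by
    intro i
    have hunit : ‖v i‖ = 1 := v.orthonormal.1 i
    have h1 : ⟪R (v i), v i⟫ = ((lam i : ℝ) : ℂ) := by
      rw [happ i, inner_smul_left, inner_self_eq_norm_sq_to_K, hunit, Complex.conj_ofReal]
      simp
    have h2 := hM (v i) hunit
    rw [h1] at h2
    simpa using h2
  -- expansion of R in matrix entries
  have hrep : ∀ j, e j = ∑ i, t i j • v i := fun j => (v.sum_repr' (e j)).symm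
  have hRe : ∀ j k, ⟪R (e j), e k⟫ = ∑ i, (lam i : ℂ) * (starRingEnd ℂ (t i j) * t i k) := by
    intro j k
    conv_lhs => rw [hrep j]
    rw [map_sum, sum_inner]
    refine Finset.sum_congr rfl fun i _ => ?_
    rw [map_smul, happ i, smul_smul, inner_smul_left]
    have : ⟪v i, e k⟫ = t i k := rfl
    rw [this, map_mul, Complex.conj_ofReal]
    ring
  -- numerical values of A at ξ i
  have hAξ : ∀ i, ⟪A (ξ i), ξ i⟫ = ∑ j, ∑ k, (starRingEnd ℂ (t i j) * t i k) * ⟪A (x j), x k⟫ := by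
    intro i
    have hAx : A (ξ i) = ∑ j, t i j • A (x j) := by
      rw [hξ]; simp [map_sum, map_smul]
    rw [hAx, hξ, sum_inner]
    refine Finset.sum_congr rfl fun j _ => ?_
    rw [inner_smul_left, inner_sum, Finset.mul_sum]
    refine Finset.sum_congr rfl fun k _ => ?_
    rw [inner_smul_right]
    ring
  -- main rearrangement
  have hmain : ∑ j, ∑ k, ⟪A (x j), x k⟫ * ⟪R (e j), e k⟫
      = ∑ i, (lam i : ℂ) * ⟪A (ξ i), ξ i⟫ := by
    calc ∑ j, ∑ k, ⟪A (x j), x k⟫ * ⟪R (e j), e k⟫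
        = ∑ j, ∑ k, ∑ i, (lam i : ℂ) * ((starRingEnd ℂ (t i j) * t i k) * ⟪A (x j), x k⟫) := by
          refine Finset.sum_congr rfl fun j _ => Finset.sum_congr rfl fun k _ => ?_
          rw [hRe j k, Finset.mul_sum]
          exact Finset.sum_congr rfl fun i _ => by ring
      _ = ∑ i, ∑ j, ∑ k, (lam i : ℂ) * ((starRingEnd ℂ (t i j) * t i k) * ⟪A (x j), x k⟫) := by
          have hswap : ∀ j : Fin m, ∑ k : Fin m, ∑ i : Fin m,
              (lam i : ℂ) * ((starRingEnd ℂ (t i j) * t i k) * ⟪A (x j), x k⟫)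
              = ∑ i : Fin m, ∑ k : Fin m,
              (lam i : ℂ) * ((starRingEnd ℂ (t i j) * t i k) * ⟪A (x j), x k⟫) :=
            fun _ => Finset.sum_comm
          simp_rw [hswap]
          exact Finset.sum_comm
      _ = ∑ i, (lam i : ℂ) * ⟪A (ξ i), ξ i⟫ := by
          refine Finset.sum_congr rfl fun i _ => ?_
          rw [hAξ i, Finset.mul_sum]
          refine Finset.sum_congr rfl fun j _ => ?_
          rw [Finset.mul_sum]
  -- Parseval-type identity
  have hxi : ∑ i, ‖ξ i‖ ^ 2 = ∑ j, ‖x j‖ ^ 2 := by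
    have hComplex : ∑ i, ⟪ξ i, ξ i⟫ = ∑ j, ⟪x j, x j⟫ := by
      have hξin : ∀ i, ⟪ξ i, ξ i⟫ = ∑ j, ∑ k, (starRingEnd ℂ (t i j) * t i k) * ⟪x j, x k⟫ := by
        intro i
        rw [hξ, sum_inner]
        refine Finset.sum_congr rfl fun j _ => ?_
        rw [inner_smul_left, inner_sum, Finset.mul_sum]
        refine Finset.sum_congr rfl fun k _ => ?_
        rw [inner_smul_right]; ring
      simp_rw [hξin]
      rw [Finset.sum_comm]
      have : ∀ j, ∑ i, ∑ k, (starRingEnd ℂ (t i j) * t i k) * ⟪x j, x k⟫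
          = ∑ k, (∑ i, starRingEnd ℂ (t i j) * t i k) * ⟪x j, x k⟫ := by
        intro j
        rw [Finset.sum_comm]
        refine Finset.sum_congr rfl fun k _ => ?_
        rw [Finset.sum_mul]
      simp_rw [this]
      have hpars : ∀ j k, (∑ i, starRingEnd ℂ (t i j) * t i k) = if j = k then 1 else 0 := by
        intro j k
        have h1 : ∀ i, starRingEnd ℂ (t i j) = ⟪e j, v i⟫ := by
          intro i
          rw [ht]
          exact (inner_conj_symm _ _)
        calc (∑ i, starRingEnd ℂ (t i j) * t i k)
            = ∑ i, ⟪e j, v i⟫ * ⟪v i, e k⟫ := by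
              refine Finset.sum_congr rfl fun i _ => by rw [h1 i]
          _ = ⟪e j, e k⟫ := v.sum_inner_mul_inner _ _
          _ = if j = k then 1 else 0 := by
              rcases eq_or_ne j k with rfl | hjk
              · simp [he, inner_self_eq_norm_sq_to_K,
                  (EuclideanSpace.basisFun (Fin m) ℂ).orthonormal.1 j]
              · simpa [he, hjk] using orthonormal_iff_ite.mp (EuclideanSpace.basisFun (Fin m) ℂ).orthonormal j k
      refine Finset.sum_congr rfl fun j _ => ?_
      rw [Finset.sum_eq_single j]
      · rw [hpars j j]; simp
      · intro k _ hkj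
        rw [hpars j k]; simp [Ne.symm hkj]
      · intro h; exact absurd (Finset.mem_univ j) h
    have hcast : ((∑ i, ‖ξ i‖ ^ 2 : ℝ) : ℂ) = ((∑ j, ‖x j‖ ^ 2 : ℝ) : ℂ) := by
      push_cast
      simpa [inner_self_eq_norm_sq_to_K] using hComplex
    exact_mod_cast hcast
  -- final bound
  calc ‖∑ j, ∑ k, ⟪A (x j), x k⟫ * ⟪R (e j), e k⟫‖
      = ‖∑ i, (lam i : ℂ) * ⟪A (ξ i), ξ i⟫‖ := by rw [hmain]
    _ ≤ ∑ i, ‖(lam i : ℂ) * ⟪A (ξ i), ξ i⟫‖ := norm_sum_le _ _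
    _ ≤ ∑ i, M * (nrad A * ‖ξ i‖ ^ 2) := by
        refine Finset.sum_le_sum fun i _ => ?_
        rw [norm_mul]
        have h1 : ‖((lam i : ℝ) : ℂ)‖ = |lam i| := by simp
        rw [h1]
        exact mul_le_mul (hlamM i) (inner_le_nrad_mul A (ξ i)) (norm_nonneg _)
          (le_trans (abs_nonneg _) (hlamM i))
    _ = M * nrad A * ∑ i, ‖ξ i‖ ^ 2 := by
        rw [Finset.mul_sum]
        exact Finset.sum_congr rfl fun i _ => by ring
    _ = nrad A * M * ∑ j, ‖x j‖ ^ 2 := by rw [hxi]; ring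

end Phi

section FiniteBound

variable {H K : Type*} [NormedAddCommGroup H] [InnerProductSpace ℂ H]
  [NormedAddCommGroup K] [InnerProductSpace ℂ K] [CompleteSpace K]

set_option maxHeartbeats 1000000 in
lemma finite_bound (A : H →L[ℂ] H) (B : K →L[ℂ] K) {m : ℕ}
    (x : Fin m → H) (f : Fin m → K) (hf : Orthonormal ℂ f) (μ : ℂ) :
    ‖∑ j, ∑ k, ⟪A (x j), x k⟫ * ⟪B (f j), f k⟫‖
      ≤ nrad A * (nrad B + nrad (B - μ • (1 : K →L[ℂ] K))) * ∑ j, ‖x j‖ ^ 2 := by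
  classical
  set e : Fin m → EuclideanSpace ℂ (Fin m) := fun j => EuclideanSpace.basisFun (Fin m) ℂ j with he
  -- the isometry from V into K determined by the orthonormal family f
  let J₀ : EuclideanSpace ℂ (Fin m) →ₗ[ℂ] K :=
    { toFun := fun v => ∑ j, v j • f j
      map_add' := by
        intro v w
        simp only [PiLp.add_apply, add_smul]
        rw [Finset.sum_add_distrib]
      map_smul' := by
        intro c v
        simp only [PiLp.smul_apply, RingHom.id_apply, smul_smul]
        rw [Finset.smul_sum]
        simp [smul_smul] }
  let J : EuclideanSpace ℂ (Fin m) →L[ℂ] K := J₀.toContinuousLinearMap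
  have hJ : ∀ v : EuclideanSpace ℂ (Fin m), J v = ∑ j, v j • f j := fun v => rfl
  have hJe : ∀ j, J (e j) = f j := by
    intro j
    rw [hJ, he]
    simp [EuclideanSpace.basisFun_apply, EuclideanSpace.single_apply, ite_smul,
      Finset.sum_ite_eq, Finset.sum_ite_eq']
  have hfik := orthonormal_iff_ite.mp hf
  have hJinner : ∀ v w : EuclideanSpace ℂ (Fin m), ⟪J v, J w⟫ = ⟪v, w⟫ := by
    intro v w
    rw [hJ, hJ, sum_inner]
    have : ∀ j, ⟪v j • f j, ∑ k, w k • f k⟫ = starRingEnd ℂ (v j) * w j := by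
      intro j
      rw [inner_smul_left, inner_sum]
      simp_rw [inner_smul_right, hfik]
      simp [mul_ite, Finset.sum_ite_eq, Finset.sum_ite_eq']
    simp_rw [this]
    rw [PiLp.inner_apply]
    simp [RCLike.inner_apply]
    exact Finset.sum_congr rfl fun _ _ => mul_comm _ _
  have hJnorm : ∀ v : EuclideanSpace ℂ (Fin m), ‖J v‖ = ‖v‖ := by
    intro v
    have h1 := hJinner v v
    rw [inner_self_eq_norm_sq_to_K, inner_self_eq_norm_sq_to_K] at h1
    have h2 : (‖J v‖ ^ 2 : ℝ) = ‖v‖ ^ 2 := by exact_mod_cast h1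
    exact (pow_left_inj₀ (norm_nonneg _) (norm_nonneg _) two_ne_zero).mp h2
  -- the phase
  set u : ℂ := if μ = 0 then 1 else μ / (‖μ‖ : ℂ) with hu
  have hu1 : ‖u‖ = 1 := by
    rw [hu]
    split_ifs with h
    · simp
    · rw [norm_div]
      rw [Complex.norm_real, Real.norm_eq_abs, abs_norm, div_self (norm_ne_zero_iff.mpr h)]
  have hu2 : (u * starRingEnd ℂ μ).im = 0 := by
    rw [hu]
    split_ifs with h
    · simp [h]
    · rw [div_mul_eq_mul_div, Complex.mul_conj]
      rw [← Complex.ofReal_div]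
      exact Complex.ofReal_im _
  -- the twisted compression of B
  set r : EuclideanSpace ℂ (Fin m) →L[ℂ] EuclideanSpace ℂ (Fin m) :=
    (starRingEnd ℂ u) • ((ContinuousLinearMap.adjoint J).comp (B.comp J)) with hrdef
  have hr : ∀ v w : EuclideanSpace ℂ (Fin m), ⟪r v, w⟫ = u * ⟪B (J v), J w⟫ := by
    intro v w
    rw [hrdef]
    rw [ContinuousLinearMap.smul_apply, inner_smul_left, Complex.conj_conj]
    rw [ContinuousLinearMap.comp_apply, ContinuousLinearMap.comp_apply,
      ContinuousLinearMap.adjoint_inner_left]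
  have hradj : ∀ v w : EuclideanSpace ℂ (Fin m), ⟪(ContinuousLinearMap.adjoint r) v, w⟫ = ⟪v, r w⟫ := by
    intro v w
    rw [ContinuousLinearMap.adjoint_inner_left]
  -- real and imaginary parts
  set R : EuclideanSpace ℂ (Fin m) →L[ℂ] EuclideanSpace ℂ (Fin m) := ((2 : ℂ)⁻¹) • (r + ContinuousLinearMap.adjoint r) with hRdef
  set S : EuclideanSpace ℂ (Fin m) →L[ℂ] EuclideanSpace ℂ (Fin m) := (Complex.I * (2 : ℂ)⁻¹) • (ContinuousLinearMap.adjoint r - r) with hSdef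
  have hRapp : ∀ v w : EuclideanSpace ℂ (Fin m), ⟪R v, w⟫ = (2 : ℂ)⁻¹ * (⟪r v, w⟫ + ⟪v, r w⟫) := by
    intro v w
    rw [hRdef, ContinuousLinearMap.smul_apply, inner_smul_left,
      ContinuousLinearMap.add_apply, inner_add_left, hradj, map_inv₀, map_ofNat]
  have hSapp : ∀ v w : EuclideanSpace ℂ (Fin m), ⟪S v, w⟫ = (-(Complex.I) * (2 : ℂ)⁻¹) * (⟪v, r w⟫ - ⟪r v, w⟫) := by
    intro v w
    rw [hSdef, ContinuousLinearMap.smul_apply, inner_smul_left,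
      ContinuousLinearMap.sub_apply, inner_sub_left, hradj, map_mul, Complex.conj_I,
      map_inv₀, map_ofNat]
  have hRsym : LinearMap.IsSymmetric (R : EuclideanSpace ℂ (Fin m) →ₗ[ℂ] EuclideanSpace ℂ (Fin m)) := by
    intro v w
    simp only [ContinuousLinearMap.coe_coe]
    rw [hRapp]
    have h2 : ⟪v, R w⟫ = starRingEnd ℂ ⟪R w, v⟫ := (inner_conj_symm _ _).symm
    rw [h2, hRapp, map_mul, map_add, inner_conj_symm, inner_conj_symm, map_inv₀, map_ofNat]
    ring
  have hSsym : LinearMap.IsSymmetric (S : EuclideanSpace ℂ (Fin m) →ₗ[ℂ] EuclideanSpace ℂ (Fin m)) := by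
    intro v w
    simp only [ContinuousLinearMap.coe_coe]
    rw [hSapp]
    have h2 : ⟪v, S w⟫ = starRingEnd ℂ ⟪S w, v⟫ := (inner_conj_symm _ _).symm
    rw [h2, hSapp, map_mul, map_sub, inner_conj_symm, inner_conj_symm]
    rw [map_mul, map_neg, Complex.conj_I, map_inv₀, map_ofNat]
    ring
  -- pointwise decomposition
  have hpoint : ∀ v w : EuclideanSpace ℂ (Fin m), ⟪r v, w⟫ = ⟪R v, w⟫ - Complex.I * ⟪S v, w⟫ := by
    intro v w
    rw [hRapp, hSapp]
    linear_combination (-(2 : ℂ)⁻¹ * (⟪v, r w⟫ - ⟪r v, w⟫)) * Complex.I_mul_I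
  -- bounds on numerical values of R and S
  have hMR : ∀ v : EuclideanSpace ℂ (Fin m), ‖v‖ = 1 → ‖⟪R v, v⟫‖ ≤ nrad B := by
    intro v hv
    have hz : ⟪v, r v⟫ = starRingEnd ℂ ⟪r v, v⟫ := (inner_conj_symm _ _).symm
    rw [hRapp, hz, Complex.add_conj]
    have : ((2:ℂ)⁻¹ * ((2 * (⟪r v, v⟫).re : ℝ) : ℂ)) = (((⟪r v, v⟫).re : ℝ) : ℂ) := by
      push_cast; ring
    rw [this]
    have h1 : ‖(((⟪r v, v⟫).re : ℝ) : ℂ)‖ = |(⟪r v, v⟫).re| := by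
      rw [Complex.norm_real, Real.norm_eq_abs]
    rw [h1]
    calc |(⟪r v, v⟫).re| ≤ ‖⟪r v, v⟫‖ := by
          exact Complex.abs_re_le_norm _
      _ = ‖⟪B (J v), J v⟫‖ := by rw [hr, norm_mul, hu1, one_mul]
      _ ≤ nrad B := inner_le_nrad B (J v) (by rw [hJnorm, hv])
  have hMS : ∀ v : EuclideanSpace ℂ (Fin m), ‖v‖ = 1 → ‖⟪S v, v⟫‖ ≤ nrad (B - μ • (1 : K →L[ℂ] K)) := by
    intro v hv
    have hJv : ‖J v‖ = 1 := by rw [hJnorm, hv]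
    have hz : ⟪v, r v⟫ = starRingEnd ℂ ⟪r v, v⟫ := (inner_conj_symm _ _).symm
    have hsub : starRingEnd ℂ ⟪r v, v⟫ - ⟪r v, v⟫ = -(((2 * (⟪r v, v⟫).im : ℝ) : ℂ) * Complex.I) := by
      rw [← Complex.sub_conj]; ring
    rw [hSapp, hz, hsub]
    have heval : (-(Complex.I) * (2 : ℂ)⁻¹) * (-(((2 * (⟪r v, v⟫).im : ℝ) : ℂ) * Complex.I))
        = -(((⟪r v, v⟫).im : ℝ) : ℂ) := by
      push_cast
      linear_combination ((⟪r v, v⟫).im : ℂ) * Complex.I_mul_I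
    rw [heval]
    have h1 : ‖-((((⟪r v, v⟫).im : ℝ)) : ℂ)‖ = |(⟪r v, v⟫).im| := by
      rw [norm_neg, Complex.norm_real, Real.norm_eq_abs]
    rw [h1]
    -- decompose z = u * w' + u * conj μ
    have hBsplit : ⟪B (J v), J v⟫ = ⟪(B - μ • (1 : K →L[ℂ] K)) (J v), J v⟫ + starRingEnd ℂ μ := by
      rw [ContinuousLinearMap.sub_apply, ContinuousLinearMap.smul_apply, ContinuousLinearMap.one_apply]
      rw [inner_sub_left, inner_smul_left, inner_self_eq_norm_sq_to_K, hJv]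
      push_cast
      ring
    have him : (⟪r v, v⟫).im = (u * ⟪(B - μ • (1 : K →L[ℂ] K)) (J v), J v⟫).im := by
      rw [hr, hBsplit, mul_add, Complex.add_im, hu2, add_zero]
    rw [him]
    calc |(u * ⟪(B - μ • (1 : K →L[ℂ] K)) (J v), J v⟫).im|
        ≤ ‖u * ⟪(B - μ • (1 : K →L[ℂ] K)) (J v), J v⟫‖ := by
          exact Complex.abs_im_le_norm _
      _ = ‖⟪(B - μ • (1 : K →L[ℂ] K)) (J v), J v⟫‖ := by rw [norm_mul, hu1, one_mul]
      _ ≤ nrad (B - μ • (1 : K →L[ℂ] K)) := inner_le_nrad _ (J v) hJv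
  -- assemble
  have hre : ∀ j k, ⟪r (e j), e k⟫ = u * ⟪B (f j), f k⟫ := by
    intro j k
    rw [hr, hJe, hJe]
  have hsum : u * (∑ j, ∑ k, ⟪A (x j), x k⟫ * ⟪B (f j), f k⟫)
      = (∑ j, ∑ k, ⟪A (x j), x k⟫ * ⟪R (e j), e k⟫)
        - Complex.I * (∑ j, ∑ k, ⟪A (x j), x k⟫ * ⟪S (e j), e k⟫) := by
    simp_rw [Finset.mul_sum, ← Finset.sum_sub_distrib]
    refine Finset.sum_congr rfl fun j _ => Finset.sum_congr rfl fun k _ => ?_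
    have hp : u * ⟪B (f j), f k⟫ = ⟪R (e j), e k⟫ - Complex.I * ⟪S (e j), e k⟫ := by
      rw [← hre j k]
      exact hpoint _ _
    linear_combination ⟪A (x j), x k⟫ * hp
  have hnorm : ‖∑ j, ∑ k, ⟪A (x j), x k⟫ * ⟪B (f j), f k⟫‖
      = ‖u * (∑ j, ∑ k, ⟪A (x j), x k⟫ * ⟪B (f j), f k⟫)‖ := by
    rw [norm_mul, hu1, one_mul]
  rw [hnorm, hsum]
  have hb1 := phi_bound A x R hRsym hMR
  have hb2 := phi_bound A x S hSsym hMS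
  calc ‖(∑ j, ∑ k, ⟪A (x j), x k⟫ * ⟪R (e j), e k⟫)
        - Complex.I * (∑ j, ∑ k, ⟪A (x j), x k⟫ * ⟪S (e j), e k⟫)‖
      ≤ ‖∑ j, ∑ k, ⟪A (x j), x k⟫ * ⟪R (e j), e k⟫‖
        + ‖Complex.I * (∑ j, ∑ k, ⟪A (x j), x k⟫ * ⟪S (e j), e k⟫)‖ := norm_sub_le _ _
    _ = ‖∑ j, ∑ k, ⟪A (x j), x k⟫ * ⟪R (e j), e k⟫‖
        + ‖∑ j, ∑ k, ⟪A (x j), x k⟫ * ⟪S (e j), e k⟫‖ := by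
          rw [norm_mul, Complex.norm_I, one_mul]
    _ ≤ nrad A * nrad B * (∑ j, ‖x j‖ ^ 2)
        + nrad A * nrad (B - μ • (1 : K →L[ℂ] K)) * (∑ j, ‖x j‖ ^ 2) := add_le_add hb1 hb2
    _ = nrad A * (nrad B + nrad (B - μ • (1 : K →L[ℂ] K))) * ∑ j, ‖x j‖ ^ 2 := by ring

end FiniteBound

section Rep

variable {H K E : Type*} [NormedAddCommGroup H] [InnerProductSpace ℂ H]
  [NormedAddCommGroup K] [InnerProductSpace ℂ K]
  [NormedAddCommGroup E] [InnerProductSpace ℂ E]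

lemma exists_rep (tmul : H →ₗ[ℂ] K →ₗ[ℂ] E) {z : E}
    (hz : z ∈ Submodule.span ℂ (Set.range fun p : H × K => tmul p.1 p.2)) :
    ∃ (m : ℕ) (x : Fin m → H) (f : Fin m → K),
      Orthonormal ℂ f ∧ z = ∑ j, tmul (x j) (f j) := by
  classical
  obtain ⟨n, c, g, hg⟩ := Submodule.mem_span_set'.mp hz
  have hmem : ∀ i : Fin n, ∃ p : H × K, tmul p.1 p.2 = (g i : E) := fun i => (g i).2
  choose p hp using hmem
  set a : Fin n → H := fun i => c i • (p i).1 with ha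
  set b : Fin n → K := fun i => (p i).2 with hb
  have hzsum : z = ∑ i, tmul (a i) (b i) := by
    rw [← hg]
    refine Finset.sum_congr rfl fun i _ => ?_
    rw [← hp i, ha, hb]
    simp [map_smul]
  have hfin : FiniteDimensional ℂ (Submodule.span ℂ (Set.range b)) :=
    FiniteDimensional.span_of_finite ℂ (Set.finite_range b)
  set F := Submodule.span ℂ (Set.range b) with hF
  set onb := stdOrthonormalBasis ℂ F with honb
  set d := Module.finrank ℂ F with hd
  set fv : Fin d → K := fun j => (onb j : K) with hfv
  have horth : Orthonormal ℂ fv := by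
    rw [orthonormal_iff_ite]
    intro i j
    have := orthonormal_iff_ite.mp onb.orthonormal i j
    rwa [Submodule.coe_inner] at this
  have hbmem : ∀ i, b i ∈ F := fun i => Submodule.subset_span (Set.mem_range_self i)
  have hbrep : ∀ i, b i = ∑ j, (inner ℂ (fv j) (b i) : ℂ) • fv j := by
    intro i
    have h1 : ∑ j, (inner ℂ (onb j) (⟨b i, hbmem i⟩ : F) : ℂ) • onb j = (⟨b i, hbmem i⟩ : F) :=
      onb.sum_repr' _
    have h2 := congrArg (Subtype.val : F → K) h1
    rw [Submodule.coe_sum] at h2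
    simp only [Submodule.coe_smul] at h2
    have h3 : ∀ j, (inner ℂ (onb j) (⟨b i, hbmem i⟩ : F) : ℂ) = (inner ℂ (fv j) (b i) : ℂ) := by
      intro j
      rw [Submodule.coe_inner]
    calc b i = ∑ j, (inner ℂ (onb j) (⟨b i, hbmem i⟩ : F) : ℂ) • fv j := h2.symm
      _ = ∑ j, (inner ℂ (fv j) (b i) : ℂ) • fv j :=
          Finset.sum_congr rfl fun j _ => by rw [h3 j]
  refine ⟨d, fun j => ∑ i, (inner ℂ (fv j) (b i) : ℂ) • a i, fv, horth, ?_⟩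
  rw [hzsum]
  calc ∑ i, tmul (a i) (b i)
      = ∑ i, ∑ j, (inner ℂ (fv j) (b i) : ℂ) • tmul (a i) (fv j) := by
        refine Finset.sum_congr rfl fun i _ => ?_
        conv_lhs => rw [hbrep i]
        rw [map_sum]
        refine Finset.sum_congr rfl fun j _ => ?_
        rw [map_smul]
    _ = ∑ j, ∑ i, (inner ℂ (fv j) (b i) : ℂ) • tmul (a i) (fv j) := Finset.sum_comm
    _ = ∑ j, tmul (∑ i, (inner ℂ (fv j) (b i) : ℂ) • a i) (fv j) := by
        refine Finset.sum_congr rfl fun j _ => ?_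
        rw [map_sum, LinearMap.sum_apply]
        refine Finset.sum_congr rfl fun i _ => ?_
        simp [ha, map_smul, smul_smul]

end Rep

section Key

variable {H K E : Type*} [NormedAddCommGroup H] [InnerProductSpace ℂ H]
  [NormedAddCommGroup K] [InnerProductSpace ℂ K] [CompleteSpace K]
  [NormedAddCommGroup E] [InnerProductSpace ℂ E]

lemma key_bound (tmul : H →ₗ[ℂ] K →ₗ[ℂ] E) (htmul : IsHilbertTensorMap tmul)
    (A : H →L[ℂ] H) (B : K →L[ℂ] K) (T : E →L[ℂ] E)
    (hT : IsTensorOp tmul A B T) (μ : ℂ) :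
    nrad T ≤ nrad A * (nrad B + nrad (B - μ • (1 : K →L[ℂ] K))) := by
  classical
  set M := nrad A * (nrad B + nrad (B - μ • (1 : K →L[ℂ] K))) with hM
  have hM0 : 0 ≤ M :=
    mul_nonneg (nrad_nonneg _) (add_nonneg (nrad_nonneg _) (nrad_nonneg _))
  refine nrad_le T hM0 ?_
  intro z hz
  have hkey : ∀ ε : ℝ, 0 < ε → ‖⟪T z, z⟫‖ ≤ M + ε := by
    intro ε hε
    set C := 3 * M + 3 * ‖T‖ + 1 with hC
    have hCpos : 0 < C := by positivity
    set δ := min 1 (ε / C) with hδ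
    have hδpos : 0 < δ := lt_min one_pos (div_pos hε hCpos)
    have hδ1 : δ ≤ 1 := min_le_left _ _
    have hδC : δ * C ≤ ε := by
      have h2 : δ ≤ ε / C := min_le_right _ _
      exact (le_div_iff₀ hCpos).mp h2
    obtain ⟨z', hz'mem, hz'dist⟩ := htmul.dense_span.exists_dist_lt z hδpos
    obtain ⟨m, x, f, hf, hrep⟩ := exists_rep tmul hz'mem
    have hnd : ‖z - z'‖ ≤ δ := by
      rw [← dist_eq_norm]
      exact le_of_lt hz'dist
    have hz'norm : ‖z'‖ ≤ 1 + δ := by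
      have heq2 : z + (z' - z) = z' := by abel
      calc ‖z'‖ = ‖z + (z' - z)‖ := by rw [heq2]
        _ ≤ ‖z‖ + ‖z' - z‖ := norm_add_le _ _
        _ ≤ 1 + δ := by rw [hz, norm_sub_rev]; exact add_le_add_right hnd 1
    have hfik := orthonormal_iff_ite.mp hf
    have hTz' : ⟪T z', z'⟫ = ∑ j, ∑ k, ⟪A (x j), x k⟫ * ⟪B (f j), f k⟫ := by
      rw [hrep, map_sum, sum_inner]
      refine Finset.sum_congr rfl fun j _ => ?_
      rw [hT (x j) (f j), inner_sum]
      refine Finset.sum_congr rfl fun k _ => ?_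
      rw [htmul.inner_tmul]
    have hz'sq : (‖z'‖ : ℝ) ^ 2 = ∑ j, ‖x j‖ ^ 2 := by
      have hCz : ⟪z', z'⟫ = ∑ j, ⟪x j, x j⟫ := by
        rw [hrep, sum_inner]
        refine Finset.sum_congr rfl fun j _ => ?_
        rw [inner_sum]
        simp_rw [htmul.inner_tmul, hfik]
        simp [mul_ite, Finset.sum_ite_eq, Finset.sum_ite_eq']
      rw [inner_self_eq_norm_sq_to_K] at hCz
      simp_rw [inner_self_eq_norm_sq_to_K] at hCz
      exact_mod_cast hCz
    have h1 : ‖⟪T z', z'⟫‖ ≤ M * ‖z'‖ ^ 2 := by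
      rw [hTz', hz'sq]
      exact finite_bound A B x f hf μ
    have hTnorm : ∀ w w' : E, ‖⟪T w, w'⟫‖ ≤ ‖T‖ * ‖w‖ * ‖w'‖ := by
      intro w w'
      calc ‖⟪T w, w'⟫‖ ≤ ‖T w‖ * ‖w'‖ := norm_inner_le_norm _ _
        _ ≤ ‖T‖ * ‖w‖ * ‖w'‖ :=
            mul_le_mul_of_nonneg_right (T.le_opNorm w) (norm_nonneg _)
    have hdiff : ‖⟪T z, z⟫ - ⟪T z', z'⟫‖ ≤ 3 * ‖T‖ * δ := by
      have e1 : ⟪T z, z⟫ - ⟪T z', z'⟫ = ⟪T (z - z'), z⟫ + ⟪T z', z - z'⟫ := by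
        rw [map_sub, inner_sub_left, inner_sub_right]
        ring
      rw [e1]
      have b1 : ‖⟪T (z - z'), z⟫‖ ≤ ‖T‖ * δ := by
        have := hTnorm (z - z') z
        rw [hz] at this
        calc ‖⟪T (z - z'), z⟫‖ ≤ ‖T‖ * ‖z - z'‖ * 1 := this
          _ ≤ ‖T‖ * δ := by
              rw [mul_one]
              exact mul_le_mul_of_nonneg_left hnd (norm_nonneg T)
      have b2 : ‖⟪T z', z - z'⟫‖ ≤ ‖T‖ * 2 * δ := by
        calc ‖⟪T z', z - z'⟫‖ ≤ ‖T‖ * ‖z'‖ * ‖z - z'‖ := hTnorm _ _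
          _ ≤ ‖T‖ * 2 * δ := by
              have h2 : ‖z'‖ ≤ 2 := by linarith
              have s1 : ‖T‖ * ‖z'‖ ≤ ‖T‖ * 2 := mul_le_mul_of_nonneg_left h2 (norm_nonneg T)
              have s2 : ‖T‖ * ‖z'‖ * ‖z - z'‖ ≤ ‖T‖ * 2 * ‖z - z'‖ :=
                mul_le_mul_of_nonneg_right s1 (norm_nonneg _)
              have s3 : ‖T‖ * 2 * ‖z - z'‖ ≤ ‖T‖ * 2 * δ :=
                mul_le_mul_of_nonneg_left hnd (by positivity)
              linarith
      calc ‖⟪T (z - z'), z⟫ + ⟪T z', z - z'⟫‖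
          ≤ ‖⟪T (z - z'), z⟫‖ + ‖⟪T z', z - z'⟫‖ := norm_add_le _ _
        _ ≤ ‖T‖ * δ + ‖T‖ * 2 * δ := add_le_add b1 b2
        _ = 3 * ‖T‖ * δ := by ring
    have hsplit : ‖⟪T z, z⟫‖ ≤ ‖⟪T z', z'⟫‖ + ‖⟪T z, z⟫ - ⟪T z', z'⟫‖ := by
      have h4 := norm_add_le (⟪T z', z'⟫) (⟪T z, z⟫ - ⟪T z', z'⟫)
      have h5 : ⟪T z', z'⟫ + (⟪T z, z⟫ - ⟪T z', z'⟫) = ⟪T z, z⟫ := by ring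
      rw [h5] at h4
      exact h4
    have hTn : 0 ≤ ‖T‖ := norm_nonneg _
    have hz'0 : 0 ≤ ‖z'‖ := norm_nonneg _
    have hsq : ‖z'‖ ^ 2 ≤ (1 + δ) ^ 2 := by nlinarith
    have key1 : M * ‖z'‖ ^ 2 ≤ M * (1 + δ) ^ 2 := mul_le_mul_of_nonneg_left hsq hM0
    rw [hC] at hδC
    have hδδ : 0 ≤ M * δ * (1 - δ) := by
      have := hδpos.le
      have h6 : 0 ≤ 1 - δ := by linarith
      positivity
    have key2 : M * (1 + δ) ^ 2 + 3 * ‖T‖ * δ ≤ M + ε := by nlinarith [hδpos.le]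
    linarith [hsplit, h1, hdiff]
  by_contra hcon
  push_neg at hcon
  have h2 := hkey ((‖⟪T z, z⟫‖ - M) / 2) (by linarith)
  linarith

end Key

section Flip

variable {H K E : Type*} [NormedAddCommGroup H] [InnerProductSpace ℂ H]
  [NormedAddCommGroup K] [InnerProductSpace ℂ K]
  [NormedAddCommGroup E] [InnerProductSpace ℂ E]

lemma flip_htmul {tmul : H →ₗ[ℂ] K →ₗ[ℂ] E} (htmul : IsHilbertTensorMap tmul) :
    IsHilbertTensorMap tmul.flip := by
  constructor
  · intro y w x z
    rw [LinearMap.flip_apply, LinearMap.flip_apply, htmul.inner_tmul]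
    ring
  · have hrange : (Set.range fun p : K × H => tmul.flip p.1 p.2)
        = (Set.range fun p : H × K => tmul p.1 p.2) := by
      ext w
      constructor
      · rintro ⟨⟨y, x⟩, rfl⟩
        exact ⟨(x, y), rfl⟩
      · rintro ⟨⟨x, y⟩, rfl⟩
        exact ⟨(y, x), rfl⟩
    rw [hrange]
    exact htmul.dense_span

lemma flip_tensorOp {tmul : H →ₗ[ℂ] K →ₗ[ℂ] E} {A : H →L[ℂ] H} {B : K →L[ℂ] K} {T : E →L[ℂ] E}
    (hT : IsTensorOp tmul A B T) : IsTensorOp tmul.flip B A T := by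
  intro y x
  rw [LinearMap.flip_apply, LinearMap.flip_apply]
  exact hT x y

end Flip


theorem stmt2
    {H K E : Type*} [NormedAddCommGroup H] [InnerProductSpace ℂ H] [CompleteSpace H]
    [NormedAddCommGroup K] [InnerProductSpace ℂ K] [CompleteSpace K]
    [NormedAddCommGroup E] [InnerProductSpace ℂ E] [CompleteSpace E]
    (tmul : H →ₗ[ℂ] K →ₗ[ℂ] E) (htmul : IsHilbertTensorMap tmul)
    (A : H →L[ℂ] H) (B : K →L[ℂ] K) (T : E →L[ℂ] E)
    (hT : IsTensorOp tmul A B T)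
    (hwA : 0 < nrad A) (hwB : 0 < nrad B)
    (heq : nrad T = 2 * (nrad A * nrad B)) :
    nradDist A = nrad A ∧ nradDist B = nrad B ∧
      (∀ l : ℂ, nrad A ≤ nrad (A - l • (1 : H →L[ℂ] H))) ∧
      (∀ l : ℂ, nrad B ≤ nrad (B - l • (1 : K →L[ℂ] K))) := by
  have hB : ∀ l : ℂ, nrad B ≤ nrad (B - l • (1 : K →L[ℂ] K)) := by
    intro l
    have h := key_bound tmul htmul A B T hT l
    rw [heq] at h
    nlinarith [nrad_nonneg (B - l • (1 : K →L[ℂ] K))]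
  have hA : ∀ l : ℂ, nrad A ≤ nrad (A - l • (1 : H →L[ℂ] H)) := by
    intro l
    have h := key_bound tmul.flip (flip_htmul htmul) B A T (flip_tensorOp hT) l
    rw [heq] at h
    nlinarith [nrad_nonneg (A - l • (1 : H →L[ℂ] H))]
  have hdistA : nradDist A = nrad A := by
    have hbdd : BddBelow (Set.range fun l : ℂ => nrad (A - l • (1 : H →L[ℂ] H))) := by
      refine ⟨nrad A, ?_⟩
      rintro _ ⟨l, rfl⟩
      exact hA l
    apply le_antisymm
    · have h0 : nradDist A ≤ nrad (A - (0 : ℂ) • (1 : H →L[ℂ] H)) := ciInf_le hbdd 0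
      simpa using h0
    · exact le_ciInf fun l => hA l
  have hdistB : nradDist B = nrad B := by
    have hbdd : BddBelow (Set.range fun l : ℂ => nrad (B - l • (1 : K →L[ℂ] K))) := by
      refine ⟨nrad B, ?_⟩
      rintro _ ⟨l, rfl⟩
      exact hB l
    apply le_antisymm
    · have h0 : nradDist B ≤ nrad (B - (0 : ℂ) • (1 : K →L[ℂ] K)) := ciInf_le hbdd 0
      simpa using h0
    · exact le_ciInf fun l => hB l
  exact ⟨hdistA, hdistB, hA, hB⟩

end
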